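/- Let L ≥ 3 and let 𝔡_PBC be the Lie algebra over ℝ generated by {i·Z_j : 1 ≤ j ≤ L} ∪ {i·X_j·X_{j+1} : 1 ≤ j ≤ L−1} ∪ {i·X_L·X_1} inside the 2^L × 2^L complex matrices. Then every element H ∈ 𝔡_PBC commutes with the parity operator: H·P = P·H. -/

import Mathlib

open Matrix

noncomputable section

/-- The Pauli matrix X. -/
def PX : Matrix (Fin 2) (Fin 2) ℂ := !![0, 1; 1, 0]
/-- The Pauli matrix Y. -/
def PY : Matrix (Fin 2) (Fin 2) ℂ := !![0, -Complex.I; Complex.I, 0]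
/-- The Pauli matrix Z. -/
def PZ : Matrix (Fin 2) (Fin 2) ℂ := !![1, 0; 0, -1]

/-- The operator `M_j = I₂^{⊗ j} ⊗ M ⊗ I₂^{⊗ (L-1-j)}` acting as `M` on site `j` and as the
identity elsewhere, on `(ℂ²)^{⊗ L} ≅ ℂ^{2^L}` whose standard basis is indexed by functions
`v : Fin L → Fin 2`. -/
def site (L : ℕ) (M : Matrix (Fin 2) (Fin 2) ℂ) (j : Fin L) :
    Matrix (Fin L → Fin 2) (Fin L → Fin 2) ℂ :=
  fun v w => ∏ k : Fin L, if k = j then M (v k) (w k) else (if v k = w k then 1 else 0)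

/-- The Pauli string `T^{AB}_{j,k} = A_j · Z_{j+1} · Z_{j+2} ⋯ Z_{k-1} · B_k`. -/
def pauliString (L : ℕ) (A B : Matrix (Fin 2) (Fin 2) ℂ) (j k : Fin L) :
    Matrix (Fin L → Fin 2) (Fin L → Fin 2) ℂ :=
  site L A j *
    (((List.finRange L).filter (fun m => j < m ∧ m < k)).map (site L PZ)).prod *
    site L B k

/-- The parity operator `P = Z_1 · Z_2 ⋯ Z_L`. -/
def parity (L : ℕ) : Matrix (Fin L → Fin 2) (Fin L → Fin 2) ℂ :=
  ((List.finRange L).map (site L PZ)).prod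

/-- The generators of the site-dependent protocol with open boundary conditions:
`{i·Z_j : 1 ≤ j ≤ L} ∪ {i·X_j·X_{j+1} : 1 ≤ j ≤ L-1}`. -/
def depGenOBC (L : ℕ) : Set (Matrix (Fin L → Fin 2) (Fin L → Fin 2) ℂ) :=
  {M | ∃ j : Fin L, M = Complex.I • site L PZ j} ∪
  {M | ∃ (j : ℕ) (h : j + 1 < L),
    M = Complex.I • (site L PX ⟨j, by omega⟩ * site L PX ⟨j + 1, h⟩)}

/-- The generators of the site-dependent protocol with periodic boundary conditions:
the OBC generators together with `i·X_L·X_1`. -/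
def depGenPBC (L : ℕ) (hL : 0 < L) : Set (Matrix (Fin L → Fin 2) (Fin L → Fin 2) ℂ) :=
  depGenOBC L ∪
    {Complex.I • (site L PX ⟨L - 1, by omega⟩ * site L PX ⟨0, hL⟩)}

attribute [local instance 100] LieRing.ofAssociativeRing

namespace ParityAux

variable {L : ℕ}

def sgn (v : Fin L → Fin 2) : ℂ := ∏ k : Fin L, if v k = 0 then 1 else -1

lemma site_PZ_eq (j : Fin L) :
    site L PZ j = Matrix.diagonal (fun v => if v j = 0 then (1:ℂ) else -1) := by
  ext v w
  by_cases h : v = w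
  · subst h
    rw [Matrix.diagonal_apply_eq]
    unfold site
    rw [Finset.prod_eq_single j (by intro k _ hk; simp [hk]) (by simp)]
    simp only [if_pos rfl]
    have : v j = 0 ∨ v j = 1 := by omega
    rcases this with h | h <;> simp [h, PZ]
  · rw [Matrix.diagonal_apply_ne _ h]
    obtain ⟨k, hk⟩ : ∃ k, v k ≠ w k := by
      by_contra hc; push_neg at hc; exact h (funext hc)
    unfold site
    apply Finset.prod_eq_zero (Finset.mem_univ k)
    by_cases hkj : k = j
    · subst hkj
      have h0 : v k = 0 ∨ v k = 1 := by omega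
      have h1 : w k = 0 ∨ w k = 1 := by omega
      rcases h0 with h0 | h0 <;> rcases h1 with h1 | h1 <;>
        simp_all [PZ]
    · simp [hkj, hk]

lemma parity_eq : parity L = Matrix.diagonal (sgn (L := L)) := by
  have key : ∀ l : List (Fin L),
      (l.map (site L PZ)).prod
        = Matrix.diagonal (fun v => (l.map (fun j => if v j = 0 then (1:ℂ) else -1)).prod) := by
    intro l
    induction l with
    | nil => simp
    | cons j t ih =>
        simp only [List.map_cons, List.prod_cons, ih, site_PZ_eq,
          Matrix.diagonal_mul_diagonal]
  rw [parity, key]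
  refine congrArg Matrix.diagonal (funext fun v => ?_)
  rw [sgn, Fin.prod_univ_def]

lemma sgn_flip (j : Fin L) (v u : Fin L → Fin 2) (hj : u j ≠ v j)
    (h : ∀ k, k ≠ j → u k = v k) : sgn u = - sgn v := by
  unfold sgn
  rw [← Finset.mul_prod_erase Finset.univ _ (Finset.mem_univ j),
      ← Finset.mul_prod_erase Finset.univ (fun k => if v k = 0 then (1:ℂ) else -1)
        (Finset.mem_univ j)]
  have hrest : ∏ k ∈ Finset.univ.erase j, (if u k = 0 then (1:ℂ) else -1)
      = ∏ k ∈ Finset.univ.erase j, (if v k = 0 then (1:ℂ) else -1) := by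
    apply Finset.prod_congr rfl
    intro k hk
    rw [h k (Finset.ne_of_mem_erase hk)]
  rw [hrest]
  have h0 : u j = 0 ∨ u j = 1 := by omega
  have h1 : v j = 0 ∨ v j = 1 := by omega
  rcases h0 with h0 | h0 <;> rcases h1 with h1 | h1 <;> simp_all

lemma site_PX_ne_zero (j : Fin L) {v u : Fin L → Fin 2} (h : site L PX j v u ≠ 0) :
    u j ≠ v j ∧ ∀ k, k ≠ j → u k = v k := by
  unfold site at h
  constructor
  · intro heq
    apply h
    apply Finset.prod_eq_zero (Finset.mem_univ j)
    have h0 : v j = 0 ∨ v j = 1 := by omega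
    rcases h0 with h0 | h0 <;> simp [heq, h0, PX]
  · intro k hk
    by_contra heq
    apply h
    apply Finset.prod_eq_zero (Finset.mem_univ k)
    have hne : v k ≠ u k := fun hc => heq hc.symm
    simp [hk, hne]

lemma sgn_flip' (j : Fin L) {v u : Fin L → Fin 2} (h : site L PX j v u ≠ 0) :
    sgn u = - sgn v := by
  obtain ⟨h1, h2⟩ := site_PX_ne_zero j h
  exact sgn_flip j v u h1 h2

lemma sitePX_mul_comm (j k : Fin L) :
    (site L PX j * site L PX k) * parity L = parity L * (site L PX j * site L PX k) := by
  rw [parity_eq]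
  ext v w
  rw [Matrix.mul_diagonal, Matrix.diagonal_mul, Matrix.mul_apply, Finset.sum_mul,
    Finset.mul_sum]
  refine Finset.sum_congr rfl fun u _ => ?_
  by_cases hA : site L PX j v u = 0
  · simp [hA]
  by_cases hB : site L PX k u w = 0
  · simp [hB]
  have h1 : sgn u = - sgn v := sgn_flip' j hA
  have h2 : sgn w = - sgn u := sgn_flip' k hB
  rw [h2, h1]
  ring

lemma sitePZ_mul_comm (j : Fin L) :
    site L PZ j * parity L = parity L * site L PZ j := by
  rw [parity_eq, site_PZ_eq, Matrix.diagonal_mul_diagonal, Matrix.diagonal_mul_diagonal]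
  ext v w
  by_cases h : v = w
  · subst h; simp [mul_comm]
  · simp [Matrix.diagonal_apply_ne _ h]

def commK (L : ℕ) : LieSubalgebra ℝ (Matrix (Fin L → Fin 2) (Fin L → Fin 2) ℂ) where
  carrier := {M | M * parity L = parity L * M}
  add_mem' := by
    intro a b ha hb
    simp only [Set.mem_setOf_eq] at *
    rw [add_mul, mul_add, ha, hb]
  zero_mem' := by simp
  smul_mem' := by
    intro c x hx
    simp only [Set.mem_setOf_eq] at *
    rw [smul_mul_assoc, mul_smul_comm, hx]
  lie_mem' := by
    intro a b ha hb
    simp only [Set.mem_setOf_eq] at *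
    rw [Ring.lie_def, sub_mul, mul_sub,
      mul_assoc a b, hb, ← mul_assoc a, ha, mul_assoc (parity L),
      mul_assoc b a, ha, ← mul_assoc b, hb, mul_assoc (parity L)]

lemma smul_comm_parity (c : ℂ) {M : Matrix (Fin L → Fin 2) (Fin L → Fin 2) ℂ}
    (h : M * parity L = parity L * M) :
    (c • M) * parity L = parity L * (c • M) := by
  rw [smul_mul_assoc, mul_smul_comm, h]

end ParityAux


/-- For `L ≥ 3`, every element of the Lie algebra `𝔡_PBC` generated over `ℝ` by
`{i·Z_j} ∪ {i·X_j X_{j+1}} ∪ {i·X_L X_1}` commutes with the parity operator `P`. -/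
theorem dep_pbc_commutes_parity (L : ℕ) (hL : 3 ≤ L) :
    ∀ H ∈ LieSubalgebra.lieSpan ℝ (Matrix (Fin L → Fin 2) (Fin L → Fin 2) ℂ)
        (depGenPBC L (by omega)),
      H * parity L = parity L * H := by
  intro H hH
  have hsub : depGenPBC L (by omega) ⊆ (ParityAux.commK L : Set _) := by
    rintro M (hM | hM)
    · rcases hM with ⟨j, rfl⟩ | ⟨j, hj, rfl⟩
      · exact ParityAux.smul_comm_parity _ (ParityAux.sitePZ_mul_comm j)
      · exact ParityAux.smul_comm_parity _ (ParityAux.sitePX_mul_comm _ _)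
    · rw [Set.mem_singleton_iff] at hM
      subst hM
      exact ParityAux.smul_comm_parity _ (ParityAux.sitePX_mul_comm _ _)
  exact LieSubalgebra.lieSpan_le.mpr hsub hH
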